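/- For a real-valued smooth function b on the circle with Fourier expansion b = Σ_k b̂_k e^{ikθ}, define 𝓑(b) = −b·(Λb) + (𝓗b)·(Db) and b₊ = b̂₀/2 + Σ_{k≥1} b̂_k e^{ikθ}. Then 𝓑(b) = −4 Re(b₊ · Λ(conj(b₊))). -/

import Mathlib

/-- The Fourier mode `e^{inθ}` on the circle. -/
noncomputable def fm (n : ℤ) (θ : ℝ) : ℂ := Complex.exp ((n : ℂ) * (θ : ℂ) * Complex.I)

lemma fm_norm (n : ℤ) (θ : ℝ) : ‖fm n θ‖ = 1 := by
  simp [fm, Complex.norm_exp]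

lemma fm_abs (n : ℤ) (θ : ℝ) : ‖fm n θ‖ = 1 := fm_norm n θ

lemma fm_conj (n : ℤ) (θ : ℝ) : (starRingEnd ℂ) (fm n θ) = fm (-n) θ := by
  rw [fm, ← Complex.exp_conj, fm]
  congr 1
  simp [map_mul, Complex.conj_I]

lemma fm_zero (θ : ℝ) : fm 0 θ = 1 := by simp [fm]

/- STATEMENT 9: for a real smooth function `b` on the circle, encoded by its rapidly
   decreasing Fourier coefficients `c : ℤ → ℂ` (with `c(−n) = conj(c n)` since `b` is
   real), and `𝓑(b) = −b·(Λb) + (𝓗b)·(Db)`, one has `𝓑(b) = −4 Re(b₊ · Λ(conj b₊))`,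
   where `b₊ = c₀/2 + Σ_{k≥1} c_k e^{ikθ}`.  All functions are written out as their
   Fourier series: `b = Σ c_n e^{inθ}`, `Λb = Σ |n| c_n e^{inθ}`, `𝓗b = Σ sgn(n) c_n e^{inθ}`,
   `Db = Σ n c_n e^{inθ}`, `Λ(conj b₊) = Σ_{k≥1} k conj(c_k) e^{-ikθ}`. -/
theorem stmt_9 (c : ℤ → ℂ)
    (hreal : ∀ n : ℤ, c (-n) = (starRingEnd ℂ) (c n))
    (hdecay : ∀ k : ℕ, Summable (fun n : ℤ => (|n| : ℝ) ^ k * ‖c n‖)) :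
    ∀ θ : ℝ,
      -(∑' n : ℤ, c n * fm n θ) * (∑' n : ℤ, ((|n| : ℤ) : ℂ) * c n * fm n θ)
          + (∑' n : ℤ, (Int.sign n : ℂ) * c n * fm n θ) *
            (∑' n : ℤ, (n : ℂ) * c n * fm n θ)
        = (((-4 : ℝ) *
            ((c 0 / 2 + ∑' k : ℕ, c ((k : ℤ) + 1) * fm ((k : ℤ) + 1) θ) *
              (∑' k : ℕ, ((k : ℂ) + 1) * (starRingEnd ℂ) (c ((k : ℤ) + 1)) *
                fm (-((k : ℤ) + 1)) θ)).re : ℝ) : ℂ) := by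
  intro θ
  have hsum0 : Summable (fun n : ℤ => ‖c n‖) := by simpa using hdecay 0
  have hsum1 : Summable (fun n : ℤ => (|n| : ℝ) * ‖c n‖) := by simpa using hdecay 1
  -- summability of the four series
  have sA : Summable (fun n : ℤ => c n * fm n θ) := by
    apply Summable.of_norm
    refine hsum0.congr fun n => ?_
    rw [norm_mul, fm_norm, mul_one]
  have sB : Summable (fun n : ℤ => ((|n| : ℤ) : ℂ) * c n * fm n θ) := by
    apply Summable.of_norm
    refine hsum1.congr fun n => ?_
    rw [norm_mul, norm_mul, fm_norm, mul_one]
    congr 1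
    simp [abs_abs]
  have sH : Summable (fun n : ℤ => (Int.sign n : ℂ) * c n * fm n θ) := by
    apply Summable.of_norm_bounded hsum0
    intro n
    rcases lt_trichotomy n 0 with h | h | h
    · simp [Int.sign_eq_neg_one_of_neg h, norm_mul, fm_norm, fm_abs]
    · simp [h]
    · simp [Int.sign_eq_one_of_pos h, norm_mul, fm_norm, fm_abs]
  have sD : Summable (fun n : ℤ => (n : ℂ) * c n * fm n θ) := by
    apply Summable.of_norm
    refine hsum1.congr fun n => ?_
    rw [norm_mul, norm_mul, fm_norm, mul_one]
    congr 1
    simp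
  have hinj1 : Function.Injective (fun n : ℕ => (n : ℤ) + 1) := by
    intro a b h; simpa using h
  have hinj2 : Function.Injective (fun n : ℕ => -((n : ℤ) + 1)) := by
    intro a b h; simp only [neg_inj, add_left_inj, Nat.cast_inj] at h; exact h
  -- split lemmas (beta-reduced statements)
  have splitA : (∑' n : ℤ, c n * fm n θ)
      = (∑' k : ℕ, c ((k : ℤ) + 1) * fm ((k : ℤ) + 1) θ) + c 0 * fm 0 θ
        + ∑' k : ℕ, c (-((k : ℤ) + 1)) * fm (-((k : ℤ) + 1)) θ :=
    tsum_of_add_one_of_neg_add_one (sA.comp_injective hinj1) (sA.comp_injective hinj2)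
  have splitB : (∑' n : ℤ, ((|n| : ℤ) : ℂ) * c n * fm n θ)
      = (∑' k : ℕ, ((|(k : ℤ) + 1| : ℤ) : ℂ) * c ((k : ℤ) + 1) * fm ((k : ℤ) + 1) θ)
        + ((|(0 : ℤ)| : ℤ) : ℂ) * c 0 * fm 0 θ
        + ∑' k : ℕ, ((|-((k : ℤ) + 1)| : ℤ) : ℂ) * c (-((k : ℤ) + 1)) * fm (-((k : ℤ) + 1)) θ :=
    tsum_of_add_one_of_neg_add_one (sB.comp_injective hinj1) (sB.comp_injective hinj2)
  have splitH : (∑' n : ℤ, (Int.sign n : ℂ) * c n * fm n θ)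
      = (∑' k : ℕ, ((Int.sign ((k : ℤ) + 1)) : ℂ) * c ((k : ℤ) + 1) * fm ((k : ℤ) + 1) θ)
        + ((Int.sign (0 : ℤ)) : ℂ) * c 0 * fm 0 θ
        + ∑' k : ℕ, ((Int.sign (-((k : ℤ) + 1))) : ℂ) * c (-((k : ℤ) + 1)) * fm (-((k : ℤ) + 1)) θ :=
    tsum_of_add_one_of_neg_add_one (sH.comp_injective hinj1) (sH.comp_injective hinj2)
  have splitD : (∑' n : ℤ, (n : ℂ) * c n * fm n θ)
      = (∑' k : ℕ, (((k : ℤ) + 1 : ℤ) : ℂ) * c ((k : ℤ) + 1) * fm ((k : ℤ) + 1) θ)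
        + ((0 : ℤ) : ℂ) * c 0 * fm 0 θ
        + ∑' k : ℕ, ((-((k : ℤ) + 1) : ℤ) : ℂ) * c (-((k : ℤ) + 1)) * fm (-((k : ℤ) + 1)) θ :=
    tsum_of_add_one_of_neg_add_one (sD.comp_injective hinj1) (sD.comp_injective hinj2)
  have hX : (starRingEnd ℂ) (c 0) = c 0 := by
    have := hreal 0; simpa using this.symm
  -- negative-side sums are conjugates
  have hPneg : (∑' k : ℕ, c (-((k : ℤ) + 1)) * fm (-((k : ℤ) + 1)) θ)
      = (starRingEnd ℂ) (∑' k : ℕ, c ((k : ℤ) + 1) * fm ((k : ℤ) + 1) θ) := by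
    rw [show (starRingEnd ℂ) (∑' k : ℕ, c ((k : ℤ) + 1) * fm ((k : ℤ) + 1) θ)
      = star (∑' k : ℕ, c ((k : ℤ) + 1) * fm ((k : ℤ) + 1) θ) from rfl, tsum_star]
    refine tsum_congr fun k => ?_
    have h : (starRingEnd ℂ) (c ((k : ℤ) + 1) * fm ((k : ℤ) + 1) θ)
        = c (-((k : ℤ) + 1)) * fm (-((k : ℤ) + 1)) θ := by
      rw [map_mul, fm_conj, ← hreal]
    exact h.symm
  have hLneg : (∑' k : ℕ, ((k : ℂ) + 1) * c (-((k : ℤ) + 1)) * fm (-((k : ℤ) + 1)) θ)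
      = (starRingEnd ℂ) (∑' k : ℕ, ((k : ℂ) + 1) * c ((k : ℤ) + 1) * fm ((k : ℤ) + 1) θ) := by
    rw [show (starRingEnd ℂ) (∑' k : ℕ, ((k : ℂ) + 1) * c ((k : ℤ) + 1) * fm ((k : ℤ) + 1) θ)
      = star (∑' k : ℕ, ((k : ℂ) + 1) * c ((k : ℤ) + 1) * fm ((k : ℤ) + 1) θ) from rfl, tsum_star]
    refine tsum_congr fun k => ?_
    have h : (starRingEnd ℂ) (((k : ℂ) + 1) * c ((k : ℤ) + 1) * fm ((k : ℤ) + 1) θ)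
        = ((k : ℂ) + 1) * c (-((k : ℤ) + 1)) * fm (-((k : ℤ) + 1)) θ := by
      rw [map_mul, map_mul, fm_conj, ← hreal]
      simp
    exact h.symm
  set X := c 0 with hXdef
  set P' : ℂ := ∑' k : ℕ, c ((k : ℤ) + 1) * fm ((k : ℤ) + 1) θ with hP'
  set L : ℂ := ∑' k : ℕ, ((k : ℂ) + 1) * c ((k : ℤ) + 1) * fm ((k : ℤ) + 1) θ with hL
  -- identify the RHS inner ℕ-sum with conj L
  have hQ : (∑' k : ℕ, ((k : ℂ) + 1) * (starRingEnd ℂ) (c ((k : ℤ) + 1)) *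
      fm (-((k : ℤ) + 1)) θ) = (starRingEnd ℂ) L := by
    rw [← hLneg]
    refine tsum_congr fun k => ?_
    rw [hreal]
  -- rewrite the four ℤ-sums
  have eA : (∑' n : ℤ, c n * fm n θ) = X + P' + (starRingEnd ℂ) P' := by
    rw [splitA, hPneg, fm_zero]
    ring
  have eB : (∑' n : ℤ, ((|n| : ℤ) : ℂ) * c n * fm n θ) = L + (starRingEnd ℂ) L := by
    rw [splitB]
    have e1 : (∑' k : ℕ, ((|(k : ℤ) + 1| : ℤ) : ℂ) * c ((k : ℤ) + 1) * fm ((k : ℤ) + 1) θ) = L := by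
      refine tsum_congr fun k => ?_
      have h : |(k : ℤ) + 1| = (k : ℤ) + 1 := abs_of_nonneg (by positivity)
      rw [h]; push_cast; ring
    have e2 : (∑' k : ℕ, ((|-((k : ℤ) + 1)| : ℤ) : ℂ) * c (-((k : ℤ) + 1)) * fm (-((k : ℤ) + 1)) θ)
        = (starRingEnd ℂ) L := by
      rw [← hLneg]
      refine tsum_congr fun k => ?_
      have h : |-((k : ℤ) + 1)| = (k : ℤ) + 1 := by
        rw [abs_neg]; exact abs_of_nonneg (by positivity)
      rw [h]; push_cast; ring
    rw [e1, e2]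
    simp
  have eH : (∑' n : ℤ, (Int.sign n : ℂ) * c n * fm n θ) = P' - (starRingEnd ℂ) P' := by
    rw [splitH]
    have e1 : (∑' k : ℕ, ((Int.sign ((k : ℤ) + 1)) : ℂ) * c ((k : ℤ) + 1) * fm ((k : ℤ) + 1) θ)
        = P' := by
      refine tsum_congr fun k => ?_
      have h : Int.sign ((k : ℤ) + 1) = 1 := Int.sign_eq_one_of_pos (by positivity)
      rw [h]; push_cast; ring
    have e2 : (∑' k : ℕ, ((Int.sign (-((k : ℤ) + 1))) : ℂ) * c (-((k : ℤ) + 1)) *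
        fm (-((k : ℤ) + 1)) θ) = -((starRingEnd ℂ) P') := by
      rw [← hPneg, ← tsum_neg]
      refine tsum_congr fun k => ?_
      have h : Int.sign (-((k : ℤ) + 1)) = -1 := by
        rw [Int.sign_neg, Int.sign_eq_one_of_pos (by positivity)]
      rw [h]; push_cast; ring
    rw [e1, e2]
    simp only [Int.sign_zero, Int.cast_zero, zero_mul, add_zero]
    ring
  have eD : (∑' n : ℤ, (n : ℂ) * c n * fm n θ) = L - (starRingEnd ℂ) L := by
    rw [splitD]
    have e1 : (∑' k : ℕ, (((k : ℤ) + 1 : ℤ) : ℂ) * c ((k : ℤ) + 1) * fm ((k : ℤ) + 1) θ) = L := by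
      refine tsum_congr fun k => ?_
      push_cast; ring
    have e2 : (∑' k : ℕ, ((-((k : ℤ) + 1) : ℤ) : ℂ) * c (-((k : ℤ) + 1)) * fm (-((k : ℤ) + 1)) θ)
        = -((starRingEnd ℂ) L) := by
      rw [← hLneg, ← tsum_neg]
      refine tsum_congr fun k => ?_
      push_cast; ring
    rw [e1, e2]
    simp only [Int.cast_zero, zero_mul, add_zero]
    ring
  rw [eA, eB, eH, eD, hQ]
  -- final algebra
  set u := (starRingEnd ℂ) P' with hu
  set v := (starRingEnd ℂ) L with hv
  have hzconj : (starRingEnd ℂ) ((X / 2 + P') * v) = (X / 2 + u) * L := by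
    rw [map_mul, map_add, map_div₀, hX, hv, Complex.conj_conj, map_ofNat]
  have hre : (((-4 : ℝ) * ((X / 2 + P') * v).re : ℝ) : ℂ)
      = -2 * (((X / 2 + P') * v) + (starRingEnd ℂ) ((X / 2 + P') * v)) := by
    rw [Complex.add_conj]
    push_cast
    ring
  rw [hre, hzconj]
  ring
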